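/- The Gamma function satisfies Γ(5/6)Γ(17/24)Γ(23/24)/(Γ(7/6)Γ(13/24)Γ(19/24)) = 6 · 2^{-7/6} · (√2 + 1) · Γ(2/3)³/Γ(1/3)³. -/

import Mathlib

set_option maxHeartbeats 1000000

open scoped BigOperators
open Real

lemma pow12aux (n : ℕ) : ((2:ℝ)^((1:ℝ)/12))^n = (2:ℝ)^((n:ℝ)/12) := by
  rw [← Real.rpow_natCast ((2:ℝ)^((1:ℝ)/12)) n, ← Real.rpow_mul (by norm_num)]
  congr 1; ring


lemma hs1aux : Real.sin (Real.pi * (1/24)) * Real.sin (Real.pi * (7/24)) = (Real.sqrt 2 - 1)/4 := by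
  have h := Real.cos_sub_cos (Real.pi/4) (Real.pi/3)
  rw [Real.cos_pi_div_four, Real.cos_pi_div_three] at h
  rw [show (Real.pi/4 + Real.pi/3)/2 = Real.pi * (7/24) by ring,
    show (Real.pi/4 - Real.pi/3)/2 = -(Real.pi * (1/24)) by ring, Real.sin_neg] at h
  linarith

lemma hs2aux : Real.sin (Real.pi * (5/24)) * Real.sin (Real.pi * (11/24)) = (Real.sqrt 2 + 1)/4 := by
  have h := Real.cos_sub_cos (Real.pi/4) (2*Real.pi/3)
  have hc : Real.cos (2*Real.pi/3) = -(1/2) := by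
    rw [show 2*Real.pi/3 = Real.pi - Real.pi/3 by ring, Real.cos_pi_sub, Real.cos_pi_div_three]
  rw [Real.cos_pi_div_four, hc] at h
  rw [show (Real.pi/4 + 2*Real.pi/3)/2 = Real.pi * (11/24) by ring,
    show (Real.pi/4 - 2*Real.pi/3)/2 = -(Real.pi * (5/24)) by ring, Real.sin_neg] at h
  linarith

theorem stmt15 :
    Real.Gamma (5 / 6) * Real.Gamma (17 / 24) * Real.Gamma (23 / 24) /
        (Real.Gamma (7 / 6) * Real.Gamma (13 / 24) * Real.Gamma (19 / 24))
      = 6 * (2 : ℝ) ^ (-(7 : ℝ) / 6) * (Real.sqrt 2 + 1) *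
          (Real.Gamma (2 / 3) ^ 3 / Real.Gamma (1 / 3) ^ 3) := by
  set t : ℝ := (2:ℝ)^((1:ℝ)/12) with ht_def
  have hT : ∀ n : ℕ, (2:ℝ)^((n:ℝ)/12) = t^n := fun n => (pow12aux n).symm
  have pt : 0 < t := Real.rpow_pos_of_pos (by norm_num) _
  have sp_pos : 0 < Real.sqrt π := Real.sqrt_pos.mpr Real.pi_pos
  have hpi := Real.pi_pos
  -- Gamma positivity
  have P : ∀ x : ℝ, 0 < x → 0 < Real.Gamma x := fun x hx => Real.Gamma_pos_of_pos hx
  have p1 := P (1/24) (by norm_num); have p5 := P (5/24) (by norm_num)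
  have p7 := P (7/24) (by norm_num); have p11 := P (11/24) (by norm_num)
  have p13 := P (13/24) (by norm_num); have p17 := P (17/24) (by norm_num)
  have p19 := P (19/24) (by norm_num); have p23 := P (23/24) (by norm_num)
  have pU := P (1/3) (by norm_num); have pV := P (2/3) (by norm_num)
  have pE := P (1/6) (by norm_num)
  -- power conversions
  have c11 : (2:ℝ)^((11:ℝ)/12) = t^11 := by rw [← hT 11]; norm_num
  have c7 : (2:ℝ)^((7:ℝ)/12) = t^7 := by rw [← hT 7]; norm_num
  have c5 : (2:ℝ)^((5:ℝ)/12) = t^5 := by rw [← hT 5]; norm_num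
  have c1 : (2:ℝ)^((1:ℝ)/12) = t^1 := by rw [← hT 1]; norm_num
  have c56 : (2:ℝ)^((5:ℝ)/6) = t^10 := by rw [← hT 10]; norm_num
  have c16 : (2:ℝ)^((1:ℝ)/6) = t^2 := by rw [← hT 2]; norm_num
  have c23 : (2:ℝ)^((2:ℝ)/3) = t^8 := by rw [← hT 8]; norm_num
  have c13 : (2:ℝ)^((1:ℝ)/3) = t^4 := by rw [← hT 4]; norm_num
  -- duplication formula instances
  have E1 : Real.Gamma (1/24) * Real.Gamma (13/24) = Real.Gamma (1/12) * t^11 * Real.sqrt π := by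
    have h := Real.Gamma_mul_Gamma_add_half (1/24); norm_num at h; rw [c11] at h; exact h
  have E2 : Real.Gamma (5/24) * Real.Gamma (17/24) = Real.Gamma (5/12) * t^7 * Real.sqrt π := by
    have h := Real.Gamma_mul_Gamma_add_half (5/24); norm_num at h; rw [c7] at h; exact h
  have E3 : Real.Gamma (7/24) * Real.Gamma (19/24) = Real.Gamma (7/12) * t^5 * Real.sqrt π := by
    have h := Real.Gamma_mul_Gamma_add_half (7/24); norm_num at h; rw [c5] at h; exact h
  have E4 : Real.Gamma (11/24) * Real.Gamma (23/24) = Real.Gamma (11/12) * t^1 * Real.sqrt π := by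
    have h := Real.Gamma_mul_Gamma_add_half (11/24); norm_num at h; rw [c1] at h; exact h
  have E5 : Real.Gamma (1/12) * Real.Gamma (7/12) = Real.Gamma (1/6) * t^10 * Real.sqrt π := by
    have h := Real.Gamma_mul_Gamma_add_half (1/12); norm_num at h; rw [c56] at h; exact h
  have E6 : Real.Gamma (5/12) * Real.Gamma (11/12) = Real.Gamma (5/6) * t^2 * Real.sqrt π := by
    have h := Real.Gamma_mul_Gamma_add_half (5/12); norm_num at h; rw [c16] at h; exact h
  have E7 : Real.Gamma (1/6) * Real.Gamma (2/3) = Real.Gamma (1/3) * t^8 * Real.sqrt π := by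
    have h := Real.Gamma_mul_Gamma_add_half (1/6); norm_num at h; rw [c23] at h; exact h
  have E8 : Real.Gamma (1/3) * Real.Gamma (5/6) = Real.Gamma (2/3) * t^4 * Real.sqrt π := by
    have h := Real.Gamma_mul_Gamma_add_half (1/3); norm_num at h; rw [c13] at h; exact h
  -- reflection formula instances
  have sinpos : ∀ a : ℝ, 0 < a → a < 1 → 0 < Real.sin (π * a) := by
    intro a ha ha'
    apply Real.sin_pos_of_pos_of_lt_pi (by positivity)
    nlinarith
  have F : ∀ a : ℝ, 0 < a → a < 1 →
      Real.sin (π * a) * (Real.Gamma a * Real.Gamma (1 - a)) = π := by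
    intro a ha ha'
    have h := Real.Gamma_mul_Gamma_one_sub a
    rw [h]
    field_simp [ne_of_gt (sinpos a ha ha')]
  have F1 := F (1/24) (by norm_num) (by norm_num)
  have F2 := F (5/24) (by norm_num) (by norm_num)
  have F3 := F (7/24) (by norm_num) (by norm_num)
  have F4 := F (11/24) (by norm_num) (by norm_num)
  norm_num at F1 F2 F3 F4
  have hs1 := hs1aux
  have hs2 := hs2aux
  -- combined steps
  have step1 : (Real.sqrt 2 - 1)/4 *
      (Real.Gamma (1/24) * Real.Gamma (7/24) * (Real.Gamma (17/24) * Real.Gamma (23/24))) = π^2 := by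
    linear_combination (Real.sin (π * (7/24)) * Real.Gamma (7/24) * Real.Gamma (17/24)) * F1
      + π * F3 - (Real.Gamma (1/24) * Real.Gamma (7/24) * Real.Gamma (17/24) * Real.Gamma (23/24)) * hs1
  have step2 : (Real.sqrt 2 + 1)/4 *
      (Real.Gamma (5/24) * Real.Gamma (11/24) * (Real.Gamma (13/24) * Real.Gamma (19/24))) = π^2 := by
    linear_combination (Real.sin (π * (11/24)) * Real.Gamma (11/24) * Real.Gamma (13/24)) * F2
      + π * F4 - (Real.Gamma (5/24) * Real.Gamma (11/24) * Real.Gamma (13/24) * Real.Gamma (19/24)) * hs2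
  have step3 : (Real.Gamma (5/24) * Real.Gamma (11/24)) * (Real.Gamma (17/24) * Real.Gamma (23/24))
      = Real.Gamma (5/6) * t^10 * Real.sqrt π^3 := by
    linear_combination (Real.Gamma (11/24) * Real.Gamma (23/24)) * E2
      + (Real.Gamma (5/12) * t^7 * Real.sqrt π) * E4 + (t^8 * Real.sqrt π^2) * E6
  have step4 : (Real.Gamma (1/24) * Real.Gamma (7/24)) * (Real.Gamma (13/24) * Real.Gamma (19/24))
      = Real.Gamma (1/6) * t^26 * Real.sqrt π^3 := by
    linear_combination (Real.Gamma (7/24) * Real.Gamma (19/24)) * E1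
      + (Real.Gamma (1/12) * t^11 * Real.sqrt π) * E3 + (t^16 * Real.sqrt π^2) * E5
  have step5 : (Real.sqrt 2 - 1)/4 *
      (Real.Gamma (1/24) * Real.Gamma (7/24) * (Real.Gamma (5/24) * Real.Gamma (11/24))) *
      (Real.Gamma (17/24) * Real.Gamma (23/24))^2
      = π^2 * (Real.Gamma (5/6) * t^10 * Real.sqrt π^3) := by
    linear_combination (Real.Gamma (5/24) * Real.Gamma (11/24) * (Real.Gamma (17/24) * Real.Gamma (23/24))) * step1
      + π^2 * step3
  have step6 : (Real.sqrt 2 + 1)/4 *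
      (Real.Gamma (1/24) * Real.Gamma (7/24) * (Real.Gamma (5/24) * Real.Gamma (11/24))) *
      (Real.Gamma (13/24) * Real.Gamma (19/24))^2
      = π^2 * (Real.Gamma (1/6) * t^26 * Real.sqrt π^3) := by
    linear_combination (Real.Gamma (1/24) * Real.Gamma (7/24) * (Real.Gamma (13/24) * Real.Gamma (19/24))) * step2
      + π^2 * step4
  have step7 : (Real.sqrt 2 - 1)/4 *
      (Real.Gamma (1/24) * Real.Gamma (7/24) * (Real.Gamma (5/24) * Real.Gamma (11/24))) *
      (Real.Gamma (17/24) * Real.Gamma (23/24))^2 * Real.Gamma (1/3)^3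
      = π^2 * t^14 * Real.sqrt π^4 * Real.Gamma (1/3)^2 * Real.Gamma (2/3) := by
    linear_combination Real.Gamma (1/3)^3 * step5 + (π^2 * t^10 * Real.sqrt π^3 * Real.Gamma (1/3)^2) * E8
  have step8 : (Real.sqrt 2 + 1)/4 *
      (Real.Gamma (1/24) * Real.Gamma (7/24) * (Real.Gamma (5/24) * Real.Gamma (11/24))) *
      (Real.Gamma (13/24) * Real.Gamma (19/24))^2 * Real.Gamma (2/3)^3
      = π^2 * t^34 * Real.sqrt π^4 * Real.Gamma (2/3)^2 * Real.Gamma (1/3) := by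
    linear_combination Real.Gamma (2/3)^3 * step6 + (π^2 * t^26 * Real.sqrt π^3 * Real.Gamma (2/3)^2) * E7
  have hcan : (Real.sqrt 2 - 1) * (t^10 * (Real.Gamma (17/24) * Real.Gamma (23/24)) * Real.Gamma (1/3))^2
      = (Real.sqrt 2 + 1) * ((Real.Gamma (13/24) * Real.Gamma (19/24)) * Real.Gamma (2/3))^2 := by
    have hne : Real.Gamma (1/24) * Real.Gamma (7/24) * (Real.Gamma (5/24) * Real.Gamma (11/24))
        * Real.Gamma (1/3) * Real.Gamma (2/3)^2 ≠ 0 := by positivity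
    apply mul_left_cancel₀ hne
    linear_combination 4 * (t^20 * Real.Gamma (2/3)^2) * step7 - 4 * (Real.Gamma (1/3) * Real.Gamma (2/3)) * step8
  have hs2sq : Real.sqrt 2 ^ 2 = 2 := Real.sq_sqrt (by norm_num)
  have hsq2 : (t^10 * (Real.Gamma (17/24) * Real.Gamma (23/24)) * Real.Gamma (1/3))^2
      = ((Real.sqrt 2 + 1) * ((Real.Gamma (13/24) * Real.Gamma (19/24)) * Real.Gamma (2/3)))^2 := by
    linear_combination (Real.sqrt 2 + 1) * hcan
      - (t^10 * (Real.Gamma (17/24) * Real.Gamma (23/24)) * Real.Gamma (1/3))^2 * hs2sq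
  have sqrt2pos : (0:ℝ) < Real.sqrt 2 + 1 := by positivity
  have keyL : t^10 * (Real.Gamma (17/24) * Real.Gamma (23/24)) * Real.Gamma (1/3)
      = (Real.sqrt 2 + 1) * ((Real.Gamma (13/24) * Real.Gamma (19/24)) * Real.Gamma (2/3)) := by
    have h1 : (0:ℝ) ≤ t^10 * (Real.Gamma (17/24) * Real.Gamma (23/24)) * Real.Gamma (1/3) := by
      have := mul_pos (mul_pos (pow_pos pt 10) (mul_pos p17 p23)) pU; linarith
    have h2 : (0:ℝ) ≤ (Real.sqrt 2 + 1) * ((Real.Gamma (13/24) * Real.Gamma (19/24)) * Real.Gamma (2/3)) := by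
      have := mul_pos sqrt2pos (mul_pos (mul_pos p13 p19) pV); linarith
    calc t^10 * (Real.Gamma (17/24) * Real.Gamma (23/24)) * Real.Gamma (1/3)
        = Real.sqrt ((t^10 * (Real.Gamma (17/24) * Real.Gamma (23/24)) * Real.Gamma (1/3))^2) :=
          (Real.sqrt_sq h1).symm
      _ = Real.sqrt (((Real.sqrt 2 + 1) * ((Real.Gamma (13/24) * Real.Gamma (19/24)) * Real.Gamma (2/3)))^2) := by
          rw [hsq2]
      _ = (Real.sqrt 2 + 1) * ((Real.Gamma (13/24) * Real.Gamma (19/24)) * Real.Gamma (2/3)) :=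
          Real.sqrt_sq h2
  -- final assembly
  have hfin : Real.Gamma (5/6) * (Real.Gamma (17/24) * Real.Gamma (23/24)) * Real.Gamma (1/3)^3 * t^14
      = (Real.sqrt 2 + 1) * Real.Gamma (2/3)^3 * Real.Gamma (1/6) * (Real.Gamma (13/24) * Real.Gamma (19/24)) := by
    linear_combination (Real.Gamma (17/24) * Real.Gamma (23/24) * Real.Gamma (1/3)^2 * t^14) * E8
      + (t^8 * Real.sqrt π * Real.Gamma (2/3) * Real.Gamma (1/3)) * keyL
      - ((Real.sqrt 2 + 1) * Real.Gamma (2/3)^2 * (Real.Gamma (13/24) * Real.Gamma (19/24))) * E7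
  have h2e : (2:ℝ)^(-(7:ℝ)/6) * t^14 = 1 := by
    rw [← hT 14, ← Real.rpow_add (by norm_num : (0:ℝ) < 2)]
    norm_num
  have hG76 : Real.Gamma (7/6) = 1/6 * Real.Gamma (1/6) := by
    rw [show (7:ℝ)/6 = 1/6 + 1 by norm_num, Real.Gamma_add_one (by norm_num : (1:ℝ)/6 ≠ 0)]
  rw [hG76]
  field_simp
  rw [← neg_div]
  linear_combination ((2:ℝ)^(-(7:ℝ)/6)) * hfin
    - (Real.Gamma (5/6) * Real.Gamma (17/24) * Real.Gamma (23/24) * Real.Gamma (1/3)^3) * h2e
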